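/- arXiv:1705.05509 — 5 statements merged into one kernel-verified Lean document; each statement's English description precedes it below -/
import Mathlib

section
/- Let H ≥ 2 and let a_0, a_1, b_0, b_1 be sequences of odd length n over Z_H, and let g_0, g_1, f_0, f_1 ∈ Z_n. Let u = I(L^{g_0}(a_0), L^{g_1}(a_1)) and v = I(L^{f_0}(b_0), L^{f_1}(b_1)) be the corresponding interleaved sequences of length 2n. Then for every even shift τ = 2τ_1 with 0 ≤ τ_1 < n, the cross-correlation satisfies R_{u,v}(τ) = R_{a_0,b_0}(τ_1 + f_0 − g_0) + R_{a_1,b_1}(τ_1 + f_1 − g_1), where the shift arguments are taken modulo n. -/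
/-- Cross-correlation of two sequences of length `N` over `ℤ_H`, with `ξ = exp(2πi/H)`. -/
noncomputable def crossCorr (H N : ℕ) (s t : ZMod N → ZMod H) (τ : ZMod N) : ℂ :=
  ∑ i ∈ Finset.range N,
    Complex.exp (2 * (Real.pi : ℂ) * Complex.I / (H : ℂ)) ^ ((s (i : ZMod N) - t ((i : ZMod N) + τ)).val)

/-- Cross-correlation of two binary sequences of length `N` (an integer). -/
def binCorr (N : ℕ) (s t : ZMod N → ZMod 2) (τ : ZMod N) : ℤ :=
  ∑ i ∈ Finset.range N, (-1 : ℤ) ^ ((s (i : ZMod N) + t ((i : ZMod N) + τ)).val)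

/-- Cross-correlation of two quaternary sequences of length `N`, with `ξ = √-1`. -/
noncomputable def quadCorr (N : ℕ) (s t : ZMod N → ZMod 4) (τ : ZMod N) : ℂ :=
  ∑ i ∈ Finset.range N, Complex.I ^ ((s (i : ZMod N) - t ((i : ZMod N) + τ)).val)

/-- Interleaving `u = I(a, b)`: `u(2i) = a(i)`, `u(2i+1) = b(i)`. -/
def interleaveSeq {H : ℕ} (n : ℕ) (a b : ZMod n → ZMod H) : ZMod (2 * n) → ZMod H :=
  fun k => if k.val % 2 = 0 then a ((k.val / 2 : ℕ) : ZMod n) else b ((k.val / 2 : ℕ) : ZMod n)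

/-- The inverse Gray mapping `φ⁻¹ : ℤ₂ × ℤ₂ → ℤ₄`. -/
def grayInv (a b : ZMod 2) : ZMod 4 :=
  if a = 0 then (if b = 0 then 0 else 1) else (if b = 0 then 3 else 2)

/-- Construction I: the quaternary sequence of length `2n` built from
`a₀, a₁, a₂, a₃` and bits `e₀, e₁, e₂`. -/
def constructionI (n : ℕ) (a0 a1 a2 a3 : ZMod n → ZMod 2)
    (e0 e1 e2 : ZMod 2) : ZMod (2 * n) → ZMod 4 :=
  let lam : ZMod n := (((n + 1) / 2 : ℕ) : ZMod n)
  let c := interleaveSeq n a0 (fun i => e0 + a1 (i + lam))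
  let d := interleaveSeq n (fun i => e1 + a2 i) (fun i => e2 + a3 (i + lam))
  fun i => grayInv (c i) (d i)


lemma sum_range_two_mul (n : ℕ) (f : ℕ → ℂ) :
    ∑ i ∈ Finset.range (2 * n), f i = ∑ i ∈ Finset.range n, (f (2 * i) + f (2 * i + 1)) := by
  induction n with
  | zero => simp
  | succ m ih =>
    rw [Nat.mul_succ, Finset.sum_range_succ, Finset.sum_range_succ, Finset.sum_range_succ, ← ih]
    ring_nf

lemma sum_zmod (n : ℕ) [NeZero n] (F : ZMod n → ℂ) :
    ∑ i ∈ Finset.range n, F (i : ZMod n) = ∑ x : ZMod n, F x := by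
  refine Finset.sum_nbij' (fun i => (i : ZMod n)) (fun x => x.val) ?_ ?_ ?_ ?_ ?_
  · intro i _; exact Finset.mem_univ _
  · intro x _; exact Finset.mem_range.mpr x.val_lt
  · intro i hi; exact ZMod.val_natCast_of_lt (Finset.mem_range.mp hi)
  · intro x _; exact ZMod.natCast_rightInverse x
  · intro i _; rfl

lemma corr_shift (H n : ℕ) [NeZero n] (a b : ZMod n → ZMod H) (g t : ZMod n) :
    crossCorr H n a b (t - g) =
      ∑ i ∈ Finset.range n,
        Complex.exp (2 * (Real.pi : ℂ) * Complex.I / (H : ℂ)) ^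
          ((a ((i : ZMod n) + g) - b ((i : ZMod n) + t)).val) := by
  unfold crossCorr
  rw [sum_zmod n (fun x => Complex.exp (2 * (Real.pi : ℂ) * Complex.I / (H : ℂ)) ^ ((a x - b (x + (t - g))).val)),
      sum_zmod n (fun x => Complex.exp (2 * (Real.pi : ℂ) * Complex.I / (H : ℂ)) ^ ((a (x + g) - b (x + t)).val))]
  refine Fintype.sum_equiv (Equiv.subRight g) _ _ (fun x => ?_)
  simp only [Equiv.subRight_apply]
  have h1 : x - g + g = x := sub_add_cancel x g
  have h2 : x - g + t = x + (t - g) := by ring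
  rw [h1, h2]

theorem stmt0 (H n : ℕ) (hH : 2 ≤ H) (hn : Odd n)
    (a0 a1 b0 b1 : ZMod n → ZMod H) (g0 g1 f0 f1 : ZMod n)
    (u v : ZMod (2 * n) → ZMod H)
    (hu : u = interleaveSeq n (fun i => a0 (i + g0)) (fun i => a1 (i + g1)))
    (hv : v = interleaveSeq n (fun i => b0 (i + f0)) (fun i => b1 (i + f1)))
    (τ1 : ℕ) (hτ1 : τ1 < n) :
    crossCorr H (2 * n) u v ((2 * τ1 : ℕ) : ZMod (2 * n)) =
      crossCorr H n a0 b0 ((τ1 : ZMod n) + f0 - g0) +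
        crossCorr H n a1 b1 ((τ1 : ZMod n) + f1 - g1) := by
  have hn0 : 0 < n := hn.pos
  haveI : NeZero n := ⟨hn0.ne'⟩
  haveI : NeZero (2 * n) := ⟨by omega⟩
  set ξ := Complex.exp (2 * (Real.pi : ℂ) * Complex.I / (H : ℂ)) with hξ
  have key : ∀ i < n,
      (ξ ^ ((u ((2*i : ℕ) : ZMod (2*n)) - v (((2*i : ℕ) : ZMod (2*n)) + ((2 * τ1 : ℕ) : ZMod (2*n)))).val)
        = ξ ^ ((a0 ((i : ZMod n) + g0) - b0 ((i : ZMod n) + ((τ1 : ZMod n) + f0))).val)) ∧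
      (ξ ^ ((u ((2*i+1 : ℕ) : ZMod (2*n)) - v (((2*i+1 : ℕ) : ZMod (2*n)) + ((2 * τ1 : ℕ) : ZMod (2*n)))).val)
        = ξ ^ ((a1 ((i : ZMod n) + g1) - b1 ((i : ZMod n) + ((τ1 : ZMod n) + f1))).val)) := by
    intro i hi
    have hval1 : ((2*i : ℕ) : ZMod (2*n)).val = 2*i := ZMod.val_natCast_of_lt (by omega)
    have hval2 : ((2*i+1 : ℕ) : ZMod (2*n)).val = 2*i+1 := ZMod.val_natCast_of_lt (by omega)
    have hmod : (2*(i+τ1)) % (2*n) = 2*((i+τ1) % n) := Nat.mul_mod_mul_left 2 _ n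
    have hmod2 : (2*(i+τ1)+1) % (2*n) = 2*((i+τ1) % n) + 1 := by
      conv_lhs => rw [show 2*(i+τ1)+1 = (2*((i+τ1)%n)+1) + (2*n)*((i+τ1)/n) by
        have := Nat.div_add_mod (i+τ1) n; ring_nf; omega]
      rw [Nat.add_mul_mod_self_left, Nat.mod_eq_of_lt (by have := Nat.mod_lt (i+τ1) hn0; omega)]
    have hva : (((2*i : ℕ) : ZMod (2*n)) + ((2 * τ1 : ℕ) : ZMod (2*n))).val = 2*((i+τ1)%n) := by
      rw [← Nat.cast_add, ZMod.val_natCast, show 2*i + 2*τ1 = 2*(i+τ1) by ring, hmod]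
    have hvb : (((2*i+1 : ℕ) : ZMod (2*n)) + ((2 * τ1 : ℕ) : ZMod (2*n))).val = 2*((i+τ1)%n)+1 := by
      rw [← Nat.cast_add, ZMod.val_natCast, show 2*i+1 + 2*τ1 = 2*(i+τ1)+1 by ring, hmod2]
    have hcast : (((i+τ1) % n : ℕ) : ZMod n) = (i : ZMod n) + (τ1 : ZMod n) := by
      rw [ZMod.natCast_mod]; push_cast; ring
    constructor
    · rw [hu, hv]
      unfold interleaveSeq
      rw [hval1, hva]
      simp only [Nat.mul_mod_right, Nat.mul_div_cancel_left _ (by norm_num : 0 < 2)]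
      have ha : ((i : ZMod n) + (τ1 : ZMod n)) + f0 = (i : ZMod n) + ((τ1 : ZMod n) + f0) :=
        add_assoc _ _ _
      rw [hcast, ha]
      simp
    · rw [hu, hv]
      unfold interleaveSeq
      rw [hval2, hvb]
      have ha : ((i : ZMod n) + (τ1 : ZMod n)) + f1 = (i : ZMod n) + ((τ1 : ZMod n) + f1) :=
        add_assoc _ _ _
      rw [if_neg (by omega), if_neg (by omega),
        show (2*i+1)/2 = i by omega, show (2*((i+τ1)%n)+1)/2 = (i+τ1)%n by omega, hcast]
      simp only [ha]
  have h0 : crossCorr H n a0 b0 ((τ1 : ZMod n) + f0 - g0) =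
      ∑ i ∈ Finset.range n, ξ ^ ((a0 ((i : ZMod n) + g0) - b0 ((i : ZMod n) + ((τ1 : ZMod n) + f0))).val) :=
    corr_shift H n a0 b0 g0 _
  have h1 : crossCorr H n a1 b1 ((τ1 : ZMod n) + f1 - g1) =
      ∑ i ∈ Finset.range n, ξ ^ ((a1 ((i : ZMod n) + g1) - b1 ((i : ZMod n) + ((τ1 : ZMod n) + f1))).val) :=
    corr_shift H n a1 b1 g1 _
  rw [h0, h1, ← Finset.sum_add_distrib]
  unfold crossCorr
  rw [sum_range_two_mul]
  refine Finset.sum_congr rfl fun i hi => ?_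
  have hi' := Finset.mem_range.mp hi
  obtain ⟨k1, k2⟩ := key i hi'
  push_cast at k1 k2 ⊢
  rw [k1, k2]
end

section
/- Let H ≥ 2 and let a_0, a_1, b_0, b_1 be sequences of odd length n over Z_H, and let g_0, g_1, f_0, f_1 ∈ Z_n. Let u = I(L^{g_0}(a_0), L^{g_1}(a_1)) and v = I(L^{f_0}(b_0), L^{f_1}(b_1)) be the corresponding interleaved sequences of length 2n. Then for every odd shift τ = 2τ_1 + 1 with 0 ≤ τ_1 < n, the cross-correlation satisfies R_{u,v}(τ) = R_{a_0,b_1}(τ_1 + f_1 − g_0) + R_{a_1,b_0}(τ_1 + 1 + f_0 − g_1), where the shift arguments are taken modulo n. -/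
lemma sum_range_even_odd (f : ℕ → ℂ) (n : ℕ) :
    ∑ i ∈ Finset.range (2*n), f i = ∑ j ∈ Finset.range n, (f (2*j) + f (2*j+1)) := by
  induction n with
  | zero => simp
  | succ k ih =>
      have h : 2 * (k+1) = (2*k + 1) + 1 := by ring
      rw [h, Finset.sum_range_succ, Finset.sum_range_succ, ih, Finset.sum_range_succ]
      ring

lemma sum_range_zmod {n : ℕ} [NeZero n] (f : ZMod n → ℂ) :
    ∑ i ∈ Finset.range n, f ((i : ℕ) : ZMod n) = ∑ x : ZMod n, f x := by
  refine Finset.sum_nbij' (fun i => ((i : ℕ) : ZMod n)) (fun x => x.val) ?_ ?_ ?_ ?_ ?_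
  · intro a _; exact Finset.mem_univ _
  · intro x _; exact Finset.mem_range.2 (ZMod.val_lt x)
  · intro a ha; exact ZMod.val_natCast_of_lt (Finset.mem_range.1 ha)
  · intro x _; exact ZMod.natCast_rightInverse x
  · intro a _; rfl

lemma interleave_natCast {H n : ℕ} (hn : 0 < n) (a b : ZMod n → ZMod H) (m : ℕ) :
    interleaveSeq n a b ((m : ℕ) : ZMod (2*n)) =
      if m % 2 = 0 then a ((m / 2 : ℕ) : ZMod n) else b ((m / 2 : ℕ) : ZMod n) := by
  haveI : NeZero (2*n) := ⟨by omega⟩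
  unfold interleaveSeq
  rw [ZMod.val_natCast]
  have hmod : m % (2*n) % 2 = m % 2 := Nat.mod_mod_of_dvd m ⟨n, rfl⟩
  have key : m / 2 = n * (m / (2*n)) + (m % (2*n)) / 2 := by
    conv_lhs => rw [← Nat.div_add_mod m (2*n)]
    rw [mul_assoc, Nat.mul_add_div two_pos]
  have hdiv : ((m % (2*n) / 2 : ℕ) : ZMod n) = ((m / 2 : ℕ) : ZMod n) := by
    rw [key]; push_cast; simp
  rw [hmod, hdiv]


theorem stmt1 (H n : ℕ) (hH : 2 ≤ H) (hn : Odd n)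
    (a0 a1 b0 b1 : ZMod n → ZMod H) (g0 g1 f0 f1 : ZMod n)
    (u v : ZMod (2 * n) → ZMod H)
    (hu : u = interleaveSeq n (fun i => a0 (i + g0)) (fun i => a1 (i + g1)))
    (hv : v = interleaveSeq n (fun i => b0 (i + f0)) (fun i => b1 (i + f1)))
    (τ1 : ℕ) (hτ1 : τ1 < n) :
    crossCorr H (2 * n) u v ((2 * τ1 + 1 : ℕ) : ZMod (2 * n)) =
      crossCorr H n a0 b1 ((τ1 : ZMod n) + f1 - g0) +
        crossCorr H n a1 b0 ((τ1 : ZMod n) + 1 + f0 - g1) := by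
  have hn0 : 0 < n := hn.pos
  haveI : NeZero n := ⟨hn0.ne'⟩
  subst hu hv
  set ξ : ℂ := Complex.exp (2 * (Real.pi : ℂ) * Complex.I / (H : ℂ)) with hξ
  unfold crossCorr
  rw [sum_range_even_odd, Finset.sum_add_distrib]
  congr 1
  · -- even part
    have step : ∀ j ∈ Finset.range n,
        ξ ^ ((interleaveSeq n (fun i => a0 (i + g0)) (fun i => a1 (i + g1)) ((2*j : ℕ) : ZMod (2*n))
            - interleaveSeq n (fun i => b0 (i + f0)) (fun i => b1 (i + f1))
              (((2*j : ℕ) : ZMod (2*n)) + ((2 * τ1 + 1 : ℕ) : ZMod (2*n)))).val)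
        = (fun x : ZMod n => ξ ^ ((a0 (x + g0) - b1 (x + (τ1 : ZMod n) + f1)).val)) ((j : ℕ) : ZMod n) := by
      intro j _
      rw [← Nat.cast_add, interleave_natCast hn0, interleave_natCast hn0]
      have h1 : (2*j) % 2 = 0 := by omega
      have h2 : (2*j) / 2 = j := by omega
      have h3 : (2*j + (2*τ1+1)) % 2 = 1 := by omega
      have h4 : (2*j + (2*τ1+1)) / 2 = j + τ1 := by omega
      rw [h1, h2, h3, h4]
      norm_num
    refine (Finset.sum_congr rfl step).trans ?_
    refine (sum_range_zmod (fun x : ZMod n => ξ ^ ((a0 (x + g0) - b1 (x + (τ1 : ZMod n) + f1)).val))).trans ?_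
    refine (Fintype.sum_equiv (Equiv.addRight g0)
      (fun x : ZMod n => ξ ^ ((a0 (x + g0) - b1 (x + (τ1 : ZMod n) + f1)).val))
      (fun x : ZMod n => ξ ^ ((a0 x - b1 (x + ((τ1 : ZMod n) + f1 - g0))).val))
      (fun x => ?_)).trans
      (sum_range_zmod (fun x : ZMod n => ξ ^ ((a0 x - b1 (x + ((τ1 : ZMod n) + f1 - g0))).val))).symm
    simp only [Equiv.coe_addRight]
    congr 2
    ring
  · -- odd part
    have step : ∀ j ∈ Finset.range n,
        ξ ^ ((interleaveSeq n (fun i => a0 (i + g0)) (fun i => a1 (i + g1)) ((2*j+1 : ℕ) : ZMod (2*n))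
            - interleaveSeq n (fun i => b0 (i + f0)) (fun i => b1 (i + f1))
              (((2*j+1 : ℕ) : ZMod (2*n)) + ((2 * τ1 + 1 : ℕ) : ZMod (2*n)))).val)
        = (fun x : ZMod n => ξ ^ ((a1 (x + g1) - b0 (x + (τ1 : ZMod n) + 1 + f0)).val)) ((j : ℕ) : ZMod n) := by
      intro j _
      rw [← Nat.cast_add, interleave_natCast hn0, interleave_natCast hn0]
      have h1 : (2*j+1) % 2 = 1 := by omega
      have h2 : (2*j+1) / 2 = j := by omega
      have h3 : ((2*j+1) + (2*τ1+1)) % 2 = 0 := by omega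
      have h4 : ((2*j+1) + (2*τ1+1)) / 2 = j + τ1 + 1 := by omega
      rw [h1, h2, h3, h4]
      norm_num
    refine (Finset.sum_congr rfl step).trans ?_
    refine (sum_range_zmod (fun x : ZMod n => ξ ^ ((a1 (x + g1) - b0 (x + (τ1 : ZMod n) + 1 + f0)).val))).trans ?_
    refine (Fintype.sum_equiv (Equiv.addRight g1)
      (fun x : ZMod n => ξ ^ ((a1 (x + g1) - b0 (x + (τ1 : ZMod n) + 1 + f0)).val))
      (fun x : ZMod n => ξ ^ ((a1 x - b0 (x + ((τ1 : ZMod n) + 1 + f0 - g1))).val))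
      (fun x => ?_)).trans
      (sum_range_zmod (fun x : ZMod n => ξ ^ ((a1 x - b0 (x + ((τ1 : ZMod n) + 1 + f0 - g1))).val))).symm
    simp only [Equiv.coe_addRight]
    congr 2
    ring
end

section
/- (Krone–Sarwate) Let c, d be binary sequences of length N and let u be the quaternary sequence of length N defined by u(i) = φ^{−1}(c(i), d(i)). Then for every 0 ≤ τ < N, the auto-correlation of u satisfies R_u(τ) = (1/2)(R_c(τ) + R_d(τ)) + (ξ/2)(R_{c,d}(τ) − R_{d,c}(τ)), where ξ = √−1. -/
lemma gray_key (a b a' b' : ZMod 2) :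
    (Complex.I) ^ ((grayInv a b - grayInv a' b').val) =
      (1 / 2) * (((-1 : ℤ) ^ ((a + a').val) : ℂ) + ((-1 : ℤ) ^ ((b + b').val) : ℂ)) +
        (Complex.I / 2) * (((-1 : ℤ) ^ ((a + b').val) : ℂ) - ((-1 : ℤ) ^ ((b + a').val) : ℂ)) := by
  have h2 : ∀ x : ZMod 2, x = 0 ∨ x = 1 := by decide
  rcases h2 a with rfl | rfl <;> rcases h2 b with rfl | rfl <;> rcases h2 a' with rfl | rfl <;>
    rcases h2 b' with rfl | rfl <;>
    simp [grayInv] <;>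
    norm_num [show ((1:ZMod 2)).val = 1 by decide, show ((2:ZMod 2)).val = 0 by decide,
      show ((-3:ZMod 4)).val = 1 by decide, show ((-2:ZMod 4)).val = 2 by decide,
      show ((1:ZMod 4)).val = 1 by decide, show ((2:ZMod 4)).val = 2 by decide,
      show ((3:ZMod 4)).val = 3 by decide, Complex.ext_iff, pow_succ, Complex.I_sq]

theorem stmt3 (N : ℕ) (c d : ZMod N → ZMod 2) (u : ZMod N → ZMod 4)
    (hu : ∀ i, u i = grayInv (c i) (d i)) (τ : ZMod N) :
    quadCorr N u u τ =
      (1 / 2) * ((binCorr N c c τ : ℂ) + (binCorr N d d τ : ℂ)) +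
        (Complex.I / 2) * ((binCorr N c d τ : ℂ) - (binCorr N d c τ : ℂ)) := by
  simp only [quadCorr, binCorr, hu, Int.cast_sum, Int.cast_pow, Int.cast_neg, Int.cast_one,
    Finset.mul_sum, ← Finset.sum_add_distrib, ← Finset.sum_sub_distrib]
  refine Finset.sum_congr rfl fun i _ => ?_
  have := gray_key (c i) (d i) (c ((i : ZMod N) + τ)) (d ((i : ZMod N) + τ))
  push_cast at this ⊢
  rw [this]
end

section
/- Let n be odd, λ = (n+1)/2, and let a_0, a_1 be binary sequences of length n, e(0) ∈ {0,1}, and c = I(a_0, e(0)+L^λ(a_1)) the binary sequence of length 2n from Construction I. Then for 0 ≤ τ_0 < n: R_c(2τ_0) = R_{a_0}(τ_0) + R_{a_1}(τ_0), and R_c(2τ_0 + 1) = (−1)^{e(0)}(R_{a_0,a_1}(τ_0 + λ) + R_{a_1,a_0}(τ_0 + λ)), where shift arguments are modulo n. -/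
lemma hsum_two {M : Type*} [AddCommMonoid M] (n : ℕ) (f : ℕ → M) :
    ∑ i ∈ Finset.range (2*n), f i = ∑ j ∈ Finset.range n, (f (2*j) + f (2*j+1)) := by
  induction n with
  | zero => simp
  | succ m ih =>
      rw [show 2*(m+1) = 2*m+1+1 from by ring, Finset.sum_range_succ, Finset.sum_range_succ,
        ih, Finset.sum_range_succ]
      abel

lemma hsum_zmod {M : Type*} [AddCommMonoid M] (n : ℕ) [NeZero n] (g : ZMod n → M) :
    ∑ i ∈ Finset.range n, g ((i : ℕ) : ZMod n) = ∑ x : ZMod n, g x := by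
  refine Finset.sum_nbij' (fun i => ((i : ℕ) : ZMod n)) (fun x => x.val)
    (fun a _ => Finset.mem_univ _) (fun x _ => Finset.mem_range.mpr (ZMod.val_lt x))
    (fun a ha => ZMod.val_cast_of_lt (Finset.mem_range.mp ha))
    (fun x _ => ZMod.natCast_zmod_val x) (fun a _ => rfl)

lemma hsum_shift {M : Type*} [AddCommMonoid M] {n : ℕ} [NeZero n] (g : ZMod n → M) (l : ZMod n) :
    ∑ x : ZMod n, g (x + l) = ∑ x : ZMod n, g x :=
  Fintype.sum_equiv (Equiv.addRight l) _ _ (fun _ => rfl)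

lemma hpow (e x : ZMod 2) : (-1:ℤ)^((e+x).val) = (-1:ℤ)^e.val * (-1:ℤ)^x.val := by revert e x; decide

lemma hinterleave {H : ℕ} (n : ℕ) (hn : 0 < n) (a b : ZMod n → ZMod H) (k : ℕ) :
    interleaveSeq n a b ((k : ℕ) : ZMod (2*n)) =
      if k % 2 = 0 then a ((k / 2 : ℕ) : ZMod n) else b ((k / 2 : ℕ) : ZMod n) := by
  haveI : NeZero (2*n) := ⟨by omega⟩
  unfold interleaveSeq
  rw [ZMod.val_natCast]
  have h2 : k % (2*n) % 2 = k % 2 := Nat.mod_mod_of_dvd k ⟨n, rfl⟩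
  have hdiv : ((k % (2*n) / 2 : ℕ) : ZMod n) = ((k / 2 : ℕ) : ZMod n) := by
    have hk : k / 2 = k % (2*n) / 2 + n * (k / (2*n)) := by
      conv_lhs => rw [← Nat.mod_add_div k (2*n)]
      rw [show 2*n*(k/(2*n)) = 2*(n*(k/(2*n))) from by ring,
        Nat.add_mul_div_left _ _ two_pos]
    rw [hk]; push_cast [ZMod.natCast_self]; ring
  rw [h2, hdiv]

lemma hee' : ∀ e u v : ZMod 2, (e + u) + (e + v) = u + v := by decide


theorem stmt6 (n : ℕ) (hn : Odd n) (a0 a1 : ZMod n → ZMod 2) (e0 : ZMod 2)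
    (c : ZMod (2 * n) → ZMod 2)
    (hc : c = interleaveSeq n a0 (fun i => e0 + a1 (i + (((n + 1) / 2 : ℕ) : ZMod n))))
    (τ0 : ℕ) (hτ0 : τ0 < n) :
    binCorr (2 * n) c c ((2 * τ0 : ℕ) : ZMod (2 * n)) =
        binCorr n a0 a0 (τ0 : ZMod n) + binCorr n a1 a1 (τ0 : ZMod n) ∧
      binCorr (2 * n) c c ((2 * τ0 + 1 : ℕ) : ZMod (2 * n)) =
        (-1 : ℤ) ^ e0.val *
          (binCorr n a0 a1 ((τ0 : ZMod n) + (((n + 1) / 2 : ℕ) : ZMod n)) +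
            binCorr n a1 a0 ((τ0 : ZMod n) + (((n + 1) / 2 : ℕ) : ZMod n))) := by
  have hn0 : 0 < n := hn.pos
  haveI : NeZero n := ⟨hn0.ne'⟩
  set lam : ZMod n := (((n + 1) / 2 : ℕ) : ZMod n) with hlam
  have h2lam : lam + lam = 1 := by
    have hh : ((n+1)/2 + (n+1)/2 : ℕ) = n + 1 := by
      obtain ⟨k, hk⟩ := hn; omega
    rw [hlam, ← Nat.cast_add, hh]
    push_cast [ZMod.natCast_self]; ring
  constructor
  · -- even shift
    rw [hc]
    unfold binCorr
    rw [hsum_two]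
    have hterm : ∀ j ∈ Finset.range n,
        ((-1:ℤ) ^ ((interleaveSeq n a0 (fun i => e0 + a1 (i + lam)) ((2*j : ℕ) : ZMod (2*n)) +
            interleaveSeq n a0 (fun i => e0 + a1 (i + lam)) (((2*j : ℕ) : ZMod (2*n)) + ((2*τ0 : ℕ) : ZMod (2*n)))).val)
          + (-1:ℤ) ^ ((interleaveSeq n a0 (fun i => e0 + a1 (i + lam)) ((2*j+1 : ℕ) : ZMod (2*n)) +
            interleaveSeq n a0 (fun i => e0 + a1 (i + lam)) (((2*j+1 : ℕ) : ZMod (2*n)) + ((2*τ0 : ℕ) : ZMod (2*n)))).val))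
        = (-1:ℤ) ^ ((a0 ((j:ℕ) : ZMod n) + a0 (((j:ℕ) : ZMod n) + (τ0 : ZMod n))).val)
          + (-1:ℤ) ^ ((a1 (((j:ℕ) : ZMod n) + lam) + a1 (((j:ℕ) : ZMod n) + (τ0:ZMod n) + lam)).val) := by
      intro j _
      rw [← Nat.cast_add, ← Nat.cast_add, hinterleave n hn0, hinterleave n hn0,
        hinterleave n hn0, hinterleave n hn0]
      rw [show (2*j) % 2 = 0 from by omega, show (2*j + 2*τ0) % 2 = 0 from by omega,
        show (2*j+1) % 2 = 1 from by omega, show (2*j+1 + 2*τ0) % 2 = 1 from by omega,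
        show (2*j)/2 = j from by omega, show (2*j + 2*τ0)/2 = j + τ0 from by omega,
        show (2*j+1)/2 = j from by omega, show (2*j+1 + 2*τ0)/2 = j + τ0 from by omega]
      simp only [if_pos rfl, if_neg one_ne_zero, if_true]
      congr 1
      · congr 2
        push_cast; ring
      · rw [hee']
        congr 3
        push_cast; ring
    rw [Finset.sum_congr rfl hterm, Finset.sum_add_distrib]
    congr 1
    rw [hsum_zmod n (fun x => (-1:ℤ) ^ ((a1 (x + lam) + a1 (x + (τ0:ZMod n) + lam)).val)),
      hsum_zmod n (fun x => (-1:ℤ) ^ ((a1 x + a1 (x + (τ0:ZMod n))).val)),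
      ← hsum_shift (fun x => (-1:ℤ) ^ ((a1 x + a1 (x + (τ0:ZMod n))).val)) lam]
    apply Fintype.sum_congr
    intro x
    rw [add_right_comm]
  · -- odd shift
    rw [hc]
    unfold binCorr
    rw [hsum_two]
    have hterm : ∀ j ∈ Finset.range n,
        ((-1:ℤ) ^ ((interleaveSeq n a0 (fun i => e0 + a1 (i + lam)) ((2*j : ℕ) : ZMod (2*n)) +
            interleaveSeq n a0 (fun i => e0 + a1 (i + lam)) (((2*j : ℕ) : ZMod (2*n)) + ((2*τ0+1 : ℕ) : ZMod (2*n)))).val)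
          + (-1:ℤ) ^ ((interleaveSeq n a0 (fun i => e0 + a1 (i + lam)) ((2*j+1 : ℕ) : ZMod (2*n)) +
            interleaveSeq n a0 (fun i => e0 + a1 (i + lam)) (((2*j+1 : ℕ) : ZMod (2*n)) + ((2*τ0+1 : ℕ) : ZMod (2*n)))).val))
        = (-1:ℤ)^e0.val * (-1:ℤ) ^ ((a0 ((j:ℕ) : ZMod n) + a1 (((j:ℕ) : ZMod n) + ((τ0:ZMod n) + lam))).val)
          + (-1:ℤ)^e0.val * (-1:ℤ) ^ ((a1 (((j:ℕ) : ZMod n) + lam) + a0 (((j:ℕ) : ZMod n) + (τ0:ZMod n) + 1)).val) := by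
      intro j _
      rw [← Nat.cast_add, ← Nat.cast_add, hinterleave n hn0, hinterleave n hn0,
        hinterleave n hn0, hinterleave n hn0]
      rw [show (2*j) % 2 = 0 from by omega, show (2*j + (2*τ0+1)) % 2 = 1 from by omega,
        show (2*j+1) % 2 = 1 from by omega, show (2*j+1 + (2*τ0+1)) % 2 = 0 from by omega,
        show (2*j)/2 = j from by omega, show (2*j + (2*τ0+1))/2 = j + τ0 from by omega,
        show (2*j+1)/2 = j from by omega, show (2*j+1 + (2*τ0+1))/2 = j + τ0 + 1 from by omega]
      simp only [if_pos rfl, if_neg one_ne_zero, if_true]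
      congr 1
      · rw [show a0 ((j:ℕ):ZMod n) + (e0 + a1 (((j+τ0 : ℕ):ZMod n) + lam))
            = e0 + (a0 ((j:ℕ):ZMod n) + a1 (((j+τ0:ℕ):ZMod n) + lam)) from by ring, hpow]
        congr 3
        push_cast; ring
      · rw [show (e0 + a1 (((j:ℕ):ZMod n) + lam)) + a0 (((j+τ0+1 : ℕ):ZMod n))
            = e0 + (a1 (((j:ℕ):ZMod n) + lam) + a0 (((j+τ0+1:ℕ):ZMod n))) from by ring, hpow]
        congr 3
        push_cast; ring
    rw [Finset.sum_congr rfl hterm, Finset.sum_add_distrib, ← Finset.mul_sum, ← Finset.mul_sum,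
      ← mul_add]
    congr 2
    rw [hsum_zmod n (fun x => (-1:ℤ) ^ ((a1 (x + lam) + a0 (x + (τ0:ZMod n) + 1)).val)),
      hsum_zmod n (fun x => (-1:ℤ) ^ ((a1 x + a0 (x + ((τ0:ZMod n) + lam))).val)),
      ← hsum_shift (fun x => (-1:ℤ) ^ ((a1 x + a0 (x + ((τ0:ZMod n) + lam))).val)) lam]
    apply Fintype.sum_congr
    intro x
    have hx : x + lam + ((τ0:ZMod n) + lam) = x + (τ0:ZMod n) + 1 := by
      rw [show x + lam + ((τ0:ZMod n) + lam) = x + (τ0:ZMod n) + (lam + lam) from by ring, h2lam]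
    rw [hx]
end

section
/- Let n be odd, λ = (n+1)/2, and let a_0, a_1, a_2, a_3 be binary sequences of length n and e(0), e(1), e(2) ∈ {0,1}. Let c = I(a_0, e(0)+L^λ(a_1)) and d = I(e(1)+a_2, e(2)+L^λ(a_3)) be the binary sequences of length 2n from Construction I. Then for 0 ≤ τ_0 < n: R_{c,d}(2τ_0) = (−1)^{e(1)} R_{a_0,a_2}(τ_0) + (−1)^{e(0)+e(2)} R_{a_1,a_3}(τ_0), and R_{c,d}(2τ_0 + 1) = (−1)^{e(2)} R_{a_0,a_3}(τ_0 + λ) + (−1)^{e(0)+e(1)} R_{a_1,a_2}(τ_0 + λ), where shift arguments are modulo n. -/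
lemma aux_sum_range_eq_univ (n : ℕ) [NeZero n] (f : ZMod n → ℤ) :
    ∑ j ∈ Finset.range n, f (j : ZMod n) = ∑ x : ZMod n, f x := by
  refine Finset.sum_nbij' (fun a => (a : ZMod n)) (fun x => x.val) ?_ ?_ ?_ ?_ ?_ <;>
    simp [ZMod.val_lt, ZMod.val_cast_of_lt, Finset.mem_range]
  intro a ha; exact Nat.mod_eq_of_lt ha

lemma aux_sum_shift (n : ℕ) [NeZero n] (f : ZMod n → ℤ) (g : ZMod n) :
    ∑ j ∈ Finset.range n, f ((j : ZMod n) + g) = ∑ j ∈ Finset.range n, f (j : ZMod n) := by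
  rw [aux_sum_range_eq_univ n (fun x => f (x + g)), aux_sum_range_eq_univ n f]
  exact Equiv.sum_comp (Equiv.addRight g) f

lemma aux_even_odd (n : ℕ) (F : ℕ → ℤ) :
    ∑ i ∈ Finset.range (2 * n), F i =
      ∑ j ∈ Finset.range n, F (2 * j) + ∑ j ∈ Finset.range n, F (2 * j + 1) := by
  induction n with
  | zero => simp
  | succ m ih =>
    rw [Nat.mul_succ, Finset.sum_range_succ, Finset.sum_range_succ,
      Finset.sum_range_succ, Finset.sum_range_succ, ih]
    ring

lemma aux_sign (x y : ZMod 2) : (-1 : ℤ) ^ ((x + y).val) = (-1 : ℤ) ^ x.val * (-1 : ℤ) ^ y.val := by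
  fin_cases x <;> fin_cases y <;> decide

lemma aux_interleave_even {H : ℕ} (n : ℕ) [NeZero n] (a b : ZMod n → ZMod H) (j : ℕ) :
    interleaveSeq n a b ((2 * j : ℕ) : ZMod (2 * n)) = a (j : ZMod n) := by
  have hmod : (2 * j) % (2 * n) = 2 * (j % n) := Nat.mul_mod_mul_left 2 j n
  unfold interleaveSeq
  rw [ZMod.val_natCast, hmod]
  simp [Nat.mul_mod_right, Nat.mul_div_cancel_left, ZMod.natCast_mod]

lemma aux_interleave_odd {H : ℕ} (n : ℕ) [NeZero n] (a b : ZMod n → ZMod H) (j : ℕ) :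
    interleaveSeq n a b ((2 * j + 1 : ℕ) : ZMod (2 * n)) = b (j : ZMod n) := by
  have hn : 0 < n := Nat.pos_of_ne_zero (NeZero.ne n)
  have hlt : j % n < n := Nat.mod_lt _ hn
  have hmod : (2 * j + 1) % (2 * n) = 2 * (j % n) + 1 := by
    have h1 : 2 * j + 1 = 2 * n * (j / n) + (2 * (j % n) + 1) := by
      conv_lhs => rw [← Nat.div_add_mod j n]
      ring
    rw [h1, Nat.mul_add_mod]
    exact Nat.mod_eq_of_lt (by omega)
  unfold interleaveSeq
  rw [ZMod.val_natCast, hmod]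
  have : (2 * (j % n) + 1) % 2 = 1 := by omega
  rw [this]
  have : (2 * (j % n) + 1) / 2 = j % n := by omega
  simp [this, ZMod.natCast_mod]

theorem stmt7 (n : ℕ) (hn : Odd n) (a0 a1 a2 a3 : ZMod n → ZMod 2) (e0 e1 e2 : ZMod 2)
    (c d : ZMod (2 * n) → ZMod 2)
    (hc : c = interleaveSeq n a0 (fun i => e0 + a1 (i + (((n + 1) / 2 : ℕ) : ZMod n))))
    (hd : d = interleaveSeq n (fun i => e1 + a2 i)
      (fun i => e2 + a3 (i + (((n + 1) / 2 : ℕ) : ZMod n))))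
    (τ0 : ℕ) (hτ0 : τ0 < n) :
    binCorr (2 * n) c d ((2 * τ0 : ℕ) : ZMod (2 * n)) =
        (-1 : ℤ) ^ e1.val * binCorr n a0 a2 (τ0 : ZMod n) +
          (-1 : ℤ) ^ (e0 + e2).val * binCorr n a1 a3 (τ0 : ZMod n) ∧
      binCorr (2 * n) c d ((2 * τ0 + 1 : ℕ) : ZMod (2 * n)) =
        (-1 : ℤ) ^ e2.val *
            binCorr n a0 a3 ((τ0 : ZMod n) + (((n + 1) / 2 : ℕ) : ZMod n)) +
          (-1 : ℤ) ^ (e0 + e1).val *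
            binCorr n a1 a2 ((τ0 : ZMod n) + (((n + 1) / 2 : ℕ) : ZMod n)) := by

  subst hc hd
  have hn0 : 0 < n := hn.pos
  haveI : NeZero n := ⟨hn0.ne'⟩
  haveI : NeZero (2 * n) := ⟨by omega⟩
  set lam : ZMod n := (((n + 1) / 2 : ℕ) : ZMod n) with hlam
  have h2lam : lam + lam = 1 := by
    rw [hlam, ← Nat.cast_add]
    have hdvd : 2 ∣ n + 1 := by
      obtain ⟨k, hk⟩ := hn; omega
    have : (n + 1) / 2 + (n + 1) / 2 = n + 1 := by omega
    rw [this]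
    push_cast
    simp [ZMod.natCast_self]
  have hA : ∀ j m : ℕ, ((2 * j : ℕ) : ZMod (2 * n)) + ((2 * m : ℕ) : ZMod (2 * n))
      = ((2 * (j + m) : ℕ) : ZMod (2 * n)) := by intro j m; push_cast; ring
  have hB : ∀ j m : ℕ, ((2 * j + 1 : ℕ) : ZMod (2 * n)) + ((2 * m : ℕ) : ZMod (2 * n))
      = ((2 * (j + m) + 1 : ℕ) : ZMod (2 * n)) := by intro j m; push_cast; ring
  have hC : ∀ j m : ℕ, ((2 * j : ℕ) : ZMod (2 * n)) + ((2 * m + 1 : ℕ) : ZMod (2 * n))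
      = ((2 * (j + m) + 1 : ℕ) : ZMod (2 * n)) := by intro j m; push_cast; ring
  have hD : ∀ j m : ℕ, ((2 * j + 1 : ℕ) : ZMod (2 * n)) + ((2 * m + 1 : ℕ) : ZMod (2 * n))
      = ((2 * (j + m + 1) : ℕ) : ZMod (2 * n)) := by intro j m; push_cast; ring
  have hcastn : ∀ j m : ℕ, ((j + m : ℕ) : ZMod n) = (j : ZMod n) + (m : ZMod n) := by
    intro j m; push_cast; ring
  constructor
  · unfold binCorr
    rw [aux_even_odd]
    have h1 : ∑ j ∈ Finset.range n, (-1 : ℤ) ^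
          ((interleaveSeq n a0 (fun i => e0 + a1 (i + lam)) ((2 * j : ℕ) : ZMod (2 * n)) +
            interleaveSeq n (fun i => e1 + a2 i) (fun i => e2 + a3 (i + lam))
              (((2 * j : ℕ) : ZMod (2 * n)) + ((2 * τ0 : ℕ) : ZMod (2 * n)))).val)
        = (-1 : ℤ) ^ e1.val * binCorr n a0 a2 (τ0 : ZMod n) := by
      rw [binCorr, Finset.mul_sum]
      refine Finset.sum_congr rfl fun j hj => ?_
      rw [hA, aux_interleave_even, aux_interleave_even, hcastn]
      rw [show a0 (j : ZMod n) + (e1 + a2 ((j : ZMod n) + (τ0 : ZMod n)))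
          = e1 + (a0 (j : ZMod n) + a2 ((j : ZMod n) + (τ0 : ZMod n))) by ring]
      exact aux_sign _ _
    have h2 : ∑ j ∈ Finset.range n, (-1 : ℤ) ^
          ((interleaveSeq n a0 (fun i => e0 + a1 (i + lam)) ((2 * j + 1 : ℕ) : ZMod (2 * n)) +
            interleaveSeq n (fun i => e1 + a2 i) (fun i => e2 + a3 (i + lam))
              (((2 * j + 1 : ℕ) : ZMod (2 * n)) + ((2 * τ0 : ℕ) : ZMod (2 * n)))).val)
        = (-1 : ℤ) ^ (e0 + e2).val * binCorr n a1 a3 (τ0 : ZMod n) := by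
      have step : ∀ j ∈ Finset.range n, (-1 : ℤ) ^
            ((interleaveSeq n a0 (fun i => e0 + a1 (i + lam)) ((2 * j + 1 : ℕ) : ZMod (2 * n)) +
              interleaveSeq n (fun i => e1 + a2 i) (fun i => e2 + a3 (i + lam))
                (((2 * j + 1 : ℕ) : ZMod (2 * n)) + ((2 * τ0 : ℕ) : ZMod (2 * n)))).val)
          = (-1 : ℤ) ^ (e0 + e2).val *
              (-1 : ℤ) ^ ((a1 ((j : ZMod n) + lam) +
                a3 (((j : ZMod n) + lam) + (τ0 : ZMod n))).val) := by
        intro j hj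
        rw [hB, aux_interleave_odd, aux_interleave_odd, hcastn]
        rw [show (e0 + a1 ((j : ZMod n) + lam)) +
              (e2 + a3 (((j : ZMod n) + (τ0 : ZMod n)) + lam))
            = (e0 + e2) + (a1 ((j : ZMod n) + lam) +
              a3 (((j : ZMod n) + lam) + (τ0 : ZMod n))) by ring]
        exact aux_sign _ _
      rw [Finset.sum_congr rfl step, ← Finset.mul_sum, binCorr]
      congr 1
      exact aux_sum_shift n
        (fun x => (-1 : ℤ) ^ ((a1 x + a3 (x + (τ0 : ZMod n))).val)) lam
    rw [h1, h2]; rfl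
  · unfold binCorr
    rw [aux_even_odd]
    have h1 : ∑ j ∈ Finset.range n, (-1 : ℤ) ^
          ((interleaveSeq n a0 (fun i => e0 + a1 (i + lam)) ((2 * j : ℕ) : ZMod (2 * n)) +
            interleaveSeq n (fun i => e1 + a2 i) (fun i => e2 + a3 (i + lam))
              (((2 * j : ℕ) : ZMod (2 * n)) + ((2 * τ0 + 1 : ℕ) : ZMod (2 * n)))).val)
        = (-1 : ℤ) ^ e2.val * binCorr n a0 a3 ((τ0 : ZMod n) + lam) := by
      rw [binCorr, Finset.mul_sum]
      refine Finset.sum_congr rfl fun j hj => ?_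
      rw [hC, aux_interleave_even, aux_interleave_odd, hcastn]
      rw [show a0 (j : ZMod n) + (e2 + a3 (((j : ZMod n) + (τ0 : ZMod n)) + lam))
          = e2 + (a0 (j : ZMod n) + a3 ((j : ZMod n) + ((τ0 : ZMod n) + lam))) by ring]
      exact aux_sign _ _
    have h2 : ∑ j ∈ Finset.range n, (-1 : ℤ) ^
          ((interleaveSeq n a0 (fun i => e0 + a1 (i + lam)) ((2 * j + 1 : ℕ) : ZMod (2 * n)) +
            interleaveSeq n (fun i => e1 + a2 i) (fun i => e2 + a3 (i + lam))
              (((2 * j + 1 : ℕ) : ZMod (2 * n)) + ((2 * τ0 + 1 : ℕ) : ZMod (2 * n)))).val)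
        = (-1 : ℤ) ^ (e0 + e1).val * binCorr n a1 a2 ((τ0 : ZMod n) + lam) := by
      have step : ∀ j ∈ Finset.range n, (-1 : ℤ) ^
            ((interleaveSeq n a0 (fun i => e0 + a1 (i + lam)) ((2 * j + 1 : ℕ) : ZMod (2 * n)) +
              interleaveSeq n (fun i => e1 + a2 i) (fun i => e2 + a3 (i + lam))
                (((2 * j + 1 : ℕ) : ZMod (2 * n)) + ((2 * τ0 + 1 : ℕ) : ZMod (2 * n)))).val)
          = (-1 : ℤ) ^ (e0 + e1).val *
              (-1 : ℤ) ^ ((a1 ((j : ZMod n) + lam) +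
                a2 (((j : ZMod n) + lam) + ((τ0 : ZMod n) + lam))).val) := by
        intro j hj
        rw [hD, aux_interleave_odd, aux_interleave_even, hcastn, hcastn]
        have harg : (j : ZMod n) + (τ0 : ZMod n) + ((1 : ℕ) : ZMod n)
            = ((j : ZMod n) + lam) + ((τ0 : ZMod n) + lam) := by
          rw [Nat.cast_one, ← h2lam]; ring
        rw [harg]
        rw [show (e0 + a1 ((j : ZMod n) + lam)) +
              (e1 + a2 (((j : ZMod n) + lam) + ((τ0 : ZMod n) + lam)))
            = (e0 + e1) + (a1 ((j : ZMod n) + lam) +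
              a2 (((j : ZMod n) + lam) + ((τ0 : ZMod n) + lam))) by ring]
        exact aux_sign _ _
      rw [Finset.sum_congr rfl step, ← Finset.mul_sum, binCorr]
      congr 1
      exact aux_sum_shift n
        (fun x => (-1 : ℤ) ^ ((a1 x + a2 (x + ((τ0 : ZMod n) + lam))).val)) lam
    rw [h1, h2]; rfl
end
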